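/- arXiv:2005.03572 — 9 statements merged into one kernel-verified Lean document; each statement's English description precedes it below -/
import Mathlib

section
/- Let N : ℕ and let X : Fin N → Fin N → Bool be strictly upper triangular (X i j = false whenever j ≤ i). Then the Cluster-NMS iterate after N iterations, starting from the all-ones vector, equals the original-NMS keep vector: step^[N] (fun _ => true) = nms. (Proposition 1 of the paper: Cluster-NMS with T = N iterations produces exactly the same suppression result as original NMS.) -/
/-- The Cluster-NMS update: `(clusterStep X b) j = true` iff there is no index `i`
with `b i = true` and `X i j = true`. -/
def clusterStep {N : ℕ} (X : Fin N → Fin N → Bool) (b : Fin N → Bool) : Fin N → Bool :=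
  fun j => decide (¬ ∃ i : Fin N, b i = true ∧ X i j = true)

/-- Auxiliary strong recursion for original NMS: box `n` is kept iff there is no
kept box `m < n` with `X m n = true`. -/
def origNMSAux {N : ℕ} (X : Fin N → Fin N → Bool) : (n : ℕ) → n < N → Bool :=
  fun n hn =>
    decide (∀ m : Fin n,
      ¬ (origNMSAux X m.1 (m.2.trans hn) = true ∧ X ⟨m.1, m.2.trans hn⟩ ⟨n, hn⟩ = true))
termination_by n => n
decreasing_by all_goals exact Fin.is_lt _

/-- The original-NMS keep vector: `origNMS X j = true` iff there is no `i < j`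
with `origNMS X i = true` and `X i j = true`. -/
def origNMS {N : ℕ} (X : Fin N → Fin N → Bool) : Fin N → Bool :=
  fun j => origNMSAux X j.1 j.2


lemma origNMS_spec {N : ℕ} (X : Fin N → Fin N → Bool) (j : Fin N) :
    origNMS X j = decide (¬ ∃ i : Fin N, i < j ∧ origNMS X i = true ∧ X i j = true) := by
  show origNMSAux X j.1 j.2 = _
  rw [origNMSAux]
  simp only [decide_eq_decide]
  constructor
  · rintro h ⟨i, hij, hi, hXi⟩
    exact h ⟨i.1, hij⟩ ⟨hi, by simpa using hXi⟩
  · rintro h ⟨m, hm⟩ ⟨hkeep, hXm⟩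
    exact h ⟨⟨m, hm.trans j.2⟩, hm, hkeep, by simpa using hXm⟩

lemma clusterIter_agrees {N : ℕ} (X : Fin N → Fin N → Bool)
    (hX : ∀ i j : Fin N, j ≤ i → X i j = false) :
    ∀ t, ∀ j : Fin N, j.1 < t → (clusterStep X)^[t] (fun _ => true) j = origNMS X j := by
  intro t
  induction t with
  | zero => intro j hj; omega
  | succ t ih =>
    intro j hj
    rw [Function.iterate_succ_apply']
    rw [origNMS_spec, clusterStep, decide_eq_decide]
    constructor
    · rintro h ⟨i, hij, hi, hXi⟩
      have hit : i.1 < t := lt_of_lt_of_le hij (Nat.lt_succ_iff.mp hj)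
      exact h ⟨i, by rw [ih i hit]; exact hi, hXi⟩
    · rintro h ⟨i, hi, hXi⟩
      have hij : i < j := by
        by_contra hc
        rw [hX i j (le_of_not_gt hc)] at hXi
        exact Bool.false_ne_true hXi
      have hit : i.1 < t := lt_of_lt_of_le hij (Nat.lt_succ_iff.mp hj)
      exact h ⟨i, hij, by rw [← ih i hit]; exact hi, hXi⟩

/-- Proposition 1: for a strictly upper triangular Boolean IoU matrix `X`, the
Cluster-NMS iterate after `N` iterations (starting from the all-ones vector)
equals the original-NMS keep vector. -/
theorem clusterNMS_eq_origNMS {N : ℕ} (X : Fin N → Fin N → Bool)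
    (hX : ∀ i j : Fin N, j ≤ i → X i j = false) :
    (clusterStep X)^[N] (fun _ => true) = origNMS X := by
  funext j
  exact clusterIter_agrees X hX N j j.2
end

section
/- Let N : ℕ and let X : Fin N → Fin N → Bool be strictly upper triangular. Then for every k ≤ N, every t ≥ k, and every index j : Fin N with (j : ℕ) < k, the Cluster-NMS iterate agrees with original NMS on the first k entries: (step^[t] (fun _ => true)) j = nms j. (The inductive prefix claim in the proof of Proposition 1: after k iterations the first k entries are exactly the original NMS result, and they remain stable thereafter.) -/
/-- The inductive prefix claim in the proof of Proposition 1: for strictly upper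
triangular `X`, for every `k ≤ N` and every `t ≥ k`, the Cluster-NMS iterate
after `t` iterations agrees with original NMS on the first `k` entries. -/
theorem clusterNMS_prefix_eq_origNMS {N : ℕ} (X : Fin N → Fin N → Bool)
    (hX : ∀ i j : Fin N, j ≤ i → X i j = false) :
    ∀ k ≤ N, ∀ t ≥ k, ∀ j : Fin N, (j : ℕ) < k →
      (clusterStep X)^[t] (fun _ => true) j = origNMS X j := by
  have key : ∀ n : ℕ, ∀ t : ℕ, n < t → ∀ j : Fin N, (j : ℕ) = n →
      (clusterStep X)^[t] (fun _ => true) j = origNMS X j := by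
    intro n
    induction n using Nat.strong_induction_on with
    | _ n ih =>
      intro t ht j hj
      obtain ⟨t, rfl⟩ : ∃ t', t = t' + 1 := ⟨t - 1, by omega⟩
      rw [Function.iterate_succ_apply']
      have hb : ∀ i : Fin N, (i : ℕ) < (j : ℕ) →
          (clusterStep X)^[t] (fun _ => true) i = origNMS X i := by
        intro i hij
        exact ih i (by omega) t (by omega) i rfl
      show decide (¬ ∃ i : Fin N, (clusterStep X)^[t] (fun _ => true) i = true ∧ X i j = true)
          = origNMS X j
      unfold origNMS
      rw [origNMSAux, decide_eq_decide]
      constructor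
      · intro h m hm
        exact h ⟨⟨m.1, m.2.trans j.2⟩, by
          rw [hb _ (by exact m.2)]
          exact ⟨hm.1, by simpa [Fin.eta] using hm.2⟩⟩
      · rintro h ⟨i, hbi, hXi⟩
        by_cases hij : (i : ℕ) < (j : ℕ)
        · refine h ⟨i.1, hij⟩ ⟨?_, ?_⟩
          · show origNMS X i = true
            rw [← hb i hij]; exact hbi
          · simpa [Fin.eta] using hXi
        · have := hX i j (by omega)
          simp [this] at hXi
  intro k hk t ht j hj
  exact key (j : ℕ) t (by omega) j rfl
end

section
/- Let N : ℕ and let X : Fin N → Fin N → Bool be strictly upper triangular. Then the original-NMS keep vector is a fixed point of the Cluster-NMS update: step nms = nms. -/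
lemma origNMS_iff {N : ℕ} (X : Fin N → Fin N → Bool) (j : Fin N) :
    origNMS X j = true ↔ ∀ i : Fin N, i < j → ¬(origNMS X i = true ∧ X i j = true) := by
  show origNMSAux X j.1 j.2 = true ↔ _
  rw [origNMSAux]
  simp only [decide_eq_true_eq]
  constructor
  · intro h i hij hc
    exact h ⟨i.1, hij⟩ ⟨by simpa [origNMS] using hc.1, by simpa using hc.2⟩
  · intro h m hc
    exact h ⟨m.1, m.2.trans j.2⟩ m.2 ⟨hc.1, by simpa using hc.2⟩

/-- For a strictly upper triangular Boolean IoU matrix `X`, the original-NMS keep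
vector is a fixed point of the Cluster-NMS update. -/
theorem origNMS_fixedPoint {N : ℕ} (X : Fin N → Fin N → Bool)
    (hX : ∀ i j : Fin N, j ≤ i → X i j = false) :
    clusterStep X (origNMS X) = origNMS X := by
  funext j
  unfold clusterStep
  rcases h : origNMS X j with _ | _
  · have h2 : ¬ origNMS X j = true := by simp [h]
    rw [origNMS_iff] at h2
    push_neg at h2
    obtain ⟨i, hij, hi, hXij⟩ := h2
    simp only [decide_eq_false_iff_not, not_not]
    exact ⟨i, hi, hXij⟩
  · simp only [decide_eq_true_eq]
    rintro ⟨i, hi, hXij⟩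
    rcases lt_or_ge i j with hij | hij
    · exact (origNMS_iff X j).mp h i hij ⟨hi, hXij⟩
    · simp [hX i j hij] at hXij
end

section
/- Let N : ℕ and let X : Fin N → Fin N → Bool be strictly upper triangular. If b : Fin N → Bool is a fixed point of the Cluster-NMS update, i.e., step b = b, then b = nms. In particular, the early-stopping rule of the Cluster-NMS algorithm is correct: if the iterates satisfy bᵗ = bᵗ⁻¹ at some iteration t ≥ 1, then bᵗ equals the original NMS result. -/
/-- For a strictly upper triangular Boolean IoU matrix `X`, every fixed point of the
Cluster-NMS update equals the original-NMS keep vector; in particular, the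
early-stopping rule of Cluster-NMS is correct: if the iterate does not change at
some iteration `t ≥ 1`, then it equals the original NMS result. -/
theorem clusterNMS_fixedPoint_unique {N : ℕ} (X : Fin N → Fin N → Bool)
    (hX : ∀ i j : Fin N, j ≤ i → X i j = false) :
    (∀ b : Fin N → Bool, clusterStep X b = b → b = origNMS X) ∧
    (∀ t : ℕ, 1 ≤ t →
      (clusterStep X)^[t] (fun _ => true) = (clusterStep X)^[t - 1] (fun _ => true) →
      (clusterStep X)^[t] (fun _ => true) = origNMS X) := by
  have key : ∀ b : Fin N → Bool, clusterStep X b = b → b = origNMS X := by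
    intro b hb
    funext j
    obtain ⟨n, hn⟩ := j
    induction n using Nat.strong_induction_on with
    | _ n ih =>
      have hbj : b ⟨n, hn⟩ = decide (¬ ∃ i : Fin N, b i = true ∧ X i ⟨n, hn⟩ = true) :=
        (congrFun hb ⟨n, hn⟩).symm
      rw [hbj, origNMS]
      rw [origNMSAux]
      rw [decide_eq_decide]
      constructor
      · intro h m ⟨hm1, hm2⟩
        exact h ⟨⟨m.1, m.2.trans hn⟩, by
          rw [ih m.1 m.2 (m.2.trans hn)]; exact hm1, hm2⟩
      · rintro h ⟨i, hi1, hi2⟩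
        by_cases hlt : i.1 < n
        · refine h ⟨i.1, hlt⟩ ⟨?_, ?_⟩
          · have h2 := ih i.1 hlt i.2
            rw [Fin.eta] at h2
            exact h2.symm.trans hi1
          · exact hi2
        · have : X i ⟨n, hn⟩ = false := hX i ⟨n, hn⟩ (Fin.le_def.mpr (Nat.le_of_not_lt hlt))
          rw [this] at hi2; exact Bool.false_ne_true hi2
  refine ⟨key, fun t ht hfix => ?_⟩
  apply key
  have h1 : (clusterStep X)^[t] (fun _ => true) =
      clusterStep X ((clusterStep X)^[t - 1] (fun _ => true)) := by
    conv_lhs => rw [show t = (t - 1) + 1 from (Nat.succ_pred_eq_of_pos ht).symm]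
    rw [Function.iterate_succ_apply']
  rw [← hfix] at h1
  exact h1.symm
end

section
/- Let N : ℕ and let X : Fin N → Fin N → Bool be strictly upper triangular. Then Fast NMS over-suppresses relative to original NMS: for every j : Fin N, if (step (fun _ => true)) j = true then nms j = true. Equivalently, the set of boxes kept by Fast NMS (one application of the Cluster-NMS update to the all-ones vector) is contained in the set of boxes kept by original NMS. -/
/-- Fast NMS (one application of the Cluster-NMS update to the all-ones vector)
over-suppresses relative to original NMS: every box kept by Fast NMS is also kept
by original NMS. -/
theorem fastNMS_le_origNMS {N : ℕ} (X : Fin N → Fin N → Bool)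
    (hX : ∀ i j : Fin N, j ≤ i → X i j = false) :
    ∀ j : Fin N, clusterStep X (fun _ => true) j = true → origNMS X j = true := by
  intro j h
  simp only [clusterStep, decide_eq_true_eq, not_exists] at h
  unfold origNMS
  rw [origNMSAux]
  simp only [decide_eq_true_eq]
  rintro m ⟨-, hx⟩
  exact (h ⟨m.1, m.2.trans j.2⟩) ⟨trivial, hx⟩
end

section
/- Let N : ℕ, let X : Fin N → Fin N → Bool be strictly upper triangular, and let M : ℕ. Define adjacency adj i j ↔ (X i j = true ∨ X j i = true), and say two indices are in the same cluster if they are related by the reflexive–transitive closure of adj. If for every i : Fin N the cluster containing i (the finite set {j : Fin N | i and j are in the same cluster}) has cardinality at most M, then M iterations of Cluster-NMS suffice: step^[M] (fun _ => true) = nms. (The paper's discussion after Proposition 1: if the largest cluster contains M boxes, the vector b does not change after M iterations and equals the original NMS result, since different clusters are processed in parallel.) -/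
def heightAux {N : ℕ} (X : Fin N → Fin N → Bool) : (n : ℕ) → n < N → ℕ :=
  fun n hn =>
    Finset.univ.sup (fun m : Fin n =>
      if X ⟨m.1, m.2.trans hn⟩ ⟨n, hn⟩ = true then heightAux X m.1 (m.2.trans hn) + 1 else 0)
termination_by n => n
decreasing_by all_goals exact Fin.is_lt _

def nmsHeight {N : ℕ} (X : Fin N → Fin N → Bool) : Fin N → ℕ :=
  fun j => heightAux X j.1 j.2

lemma height_lt {N : ℕ} (X : Fin N → Fin N → Bool) {i j : Fin N} (hij : i.1 < j.1)
    (hx : X i j = true) : nmsHeight X i + 1 ≤ nmsHeight X j := by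
  have h1 : nmsHeight X j = heightAux X j.1 j.2 := rfl
  rw [h1, heightAux]
  have h2 := Finset.le_sup (f := fun m : Fin j.1 =>
      if X ⟨m.1, m.2.trans j.2⟩ ⟨j.1, j.2⟩ = true then heightAux X m.1 (m.2.trans j.2) + 1 else 0)
    (Finset.mem_univ (⟨i.1, hij⟩ : Fin j.1))
  simp only at h2
  rw [if_pos (show X ⟨i.1, _⟩ ⟨j.1, j.2⟩ = true from hx)] at h2
  exact h2

lemma origNMS_eq {N : ℕ} (X : Fin N → Fin N → Bool)
    (hX : ∀ i j : Fin N, j ≤ i → X i j = false) (j : Fin N) :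
    origNMS X j = clusterStep X (origNMS X) j := by
  show origNMSAux X j.1 j.2 = _
  rw [origNMSAux, clusterStep, decide_eq_decide]
  constructor
  · rintro h ⟨i, hi, hxi⟩
    have hij : i.1 < j.1 := by
      by_contra hc
      have := hX i j (by omega)
      rw [this] at hxi; exact absurd hxi (by simp)
    exact h ⟨i.1, hij⟩ ⟨hi, hxi⟩
  · intro h m hm
    exact h ⟨⟨m.1, m.2.trans j.2⟩, hm.1, hm.2⟩

lemma iter_eq {N : ℕ} (X : Fin N → Fin N → Bool)
    (hX : ∀ i j : Fin N, j ≤ i → X i j = false) :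
    ∀ k, ∀ j : Fin N, nmsHeight X j < k →
      (clusterStep X)^[k] (fun _ => true) j = origNMS X j := by
  intro k
  induction k with
  | zero => intro j h; omega
  | succ k ih =>
    intro j hj
    rw [Function.iterate_succ_apply']
    rw [origNMS_eq X hX j, clusterStep, clusterStep, decide_eq_decide]
    have key : ∀ i : Fin N, X i j = true →
        (clusterStep X)^[k] (fun _ => true) i = origNMS X i := by
      intro i hxi
      have hij : i.1 < j.1 := by
        by_contra hc
        have := hX i j (by omega)
        rw [this] at hxi; exact absurd hxi (by simp)
      exact ih i (by have := height_lt X hij hxi; omega)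
    constructor
    · rintro h ⟨i, hi, hxi⟩; exact h ⟨i, by rw [key i hxi]; exact hi, hxi⟩
    · rintro h ⟨i, hi, hxi⟩; exact h ⟨i, by rw [← key i hxi]; exact hi, hxi⟩

lemma chain_exists {N : ℕ} (X : Fin N → Fin N → Bool) :
    ∀ j : Fin N, ∃ s : Finset (Fin N), s.card = nmsHeight X j + 1 ∧
      ∀ x ∈ s, Relation.ReflTransGen (fun a b : Fin N => X a b = true ∨ X b a = true) j x
        ∧ x ≤ j := by
  suffices h : ∀ n : ℕ, ∀ j : Fin N, j.1 = n → ∃ s : Finset (Fin N),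
      s.card = nmsHeight X j + 1 ∧
      ∀ x ∈ s, Relation.ReflTransGen (fun a b : Fin N => X a b = true ∨ X b a = true) j x
        ∧ x ≤ j by
    intro j; exact h j.1 j rfl
  intro n
  induction n using Nat.strong_induction_on with
  | _ n ih =>
  intro j hjn
  by_cases h0 : nmsHeight X j = 0
  · refine ⟨{j}, by rw [h0]; simp, ?_⟩
    intro x hx
    rw [Finset.mem_singleton] at hx
    subst hx
    exact ⟨Relation.ReflTransGen.refl, le_refl _⟩
  · -- height j > 0, so the sup is attained at some m with X ⟨m⟩ j = true
    have hj : nmsHeight X j = heightAux X j.1 j.2 := rfl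
    rw [heightAux] at hj
    have hne : (Finset.univ : Finset (Fin j.1)).Nonempty := by
      rw [Finset.univ_nonempty_iff]
      by_contra hc
      rw [not_nonempty_iff] at hc
      rw [Finset.univ_eq_empty, Finset.sup_empty] at hj
      exact h0 hj
    obtain ⟨m, _, hm⟩ := Finset.exists_mem_eq_sup _ hne (fun m : Fin j.1 =>
      if X ⟨m.1, m.2.trans j.2⟩ ⟨j.1, j.2⟩ = true then heightAux X m.1 (m.2.trans j.2) + 1 else 0)
    rw [hm] at hj
    set i : Fin N := ⟨m.1, m.2.trans j.2⟩ with hidef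
    have hxi : X i ⟨j.1, j.2⟩ = true := by
      by_contra hc
      rw [if_neg hc] at hj; exact h0 hj
    rw [if_pos hxi] at hj
    have hxij : X i j = true := hxi
    have hij : i.1 < j.1 := m.2
    obtain ⟨s, hcard, hs⟩ := ih i.1 (by omega) i rfl
    refine ⟨insert j s, ?_, ?_⟩
    · rw [Finset.card_insert_of_notMem, hcard, hj]
      · show heightAux X i.1 i.2 + 1 + 1 = _
        rfl
      · intro hmem
        have := (hs j hmem).2
        have : j.1 ≤ i.1 := this
        omega
    · intro x hx
      rw [Finset.mem_insert] at hx
      rcases hx with rfl | hx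
      · exact ⟨Relation.ReflTransGen.refl, le_refl _⟩
      · obtain ⟨hr, hle⟩ := hs x hx
        refine ⟨Relation.ReflTransGen.head (Or.inr hxij) hr, ?_⟩
        have : x.1 ≤ i.1 := hle
        show x.1 ≤ j.1
        omega

/-- If every cluster of boxes (a cluster is an equivalence class of the
reflexive–transitive closure of the adjacency `adj i j ↔ X i j = true ∨ X j i = true`)
has at most `M` boxes, then `M` iterations of Cluster-NMS suffice to recover the
original NMS result. -/
theorem clusterNMS_stops_after_cluster_size {N M : ℕ} (X : Fin N → Fin N → Bool)
    (hX : ∀ i j : Fin N, j ≤ i → X i j = false)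
    (hM : ∀ i : Fin N,
      Set.ncard {j : Fin N |
        Relation.ReflTransGen (fun a b : Fin N => X a b = true ∨ X b a = true) i j} ≤ M) :
    (clusterStep X)^[M] (fun _ => true) = origNMS X := by
  funext j
  apply iter_eq X hX
  obtain ⟨s, hcard, hs⟩ := chain_exists X j
  have hsub : (↑s : Set (Fin N)) ⊆
      {x : Fin N | Relation.ReflTransGen (fun a b : Fin N => X a b = true ∨ X b a = true) j x} := by
    intro x hx; exact (hs x hx).1
  have h1 := Set.ncard_le_ncard hsub (Set.toFinite _)
  rw [Set.ncard_coe_finset] at h1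
  have h2 := hM j
  omega
end

section
/- The CIoU loss is invariant to the scale of the regression problem: for any two axis-aligned boxes B, B' and any λ > 0, writing λB for the box whose four coordinates are λ times those of B, one has IoU(λB, λB') = IoU(B, B'), D(λB, λB') = D(B, B'), V(λB, λB') = V(B, B'), and consequently L_CIoU(λB, λB') = L_CIoU(B, B'). -/
/-- An axis-aligned box `(a₁, b₁, a₂, b₂)` with `a₁ < a₂` and `b₁ < b₂`. -/
structure Box where
  a₁ : ℝ
  b₁ : ℝ
  a₂ : ℝ
  b₂ : ℝ
  ha : a₁ < a₂
  hb : b₁ < b₂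

namespace Box

/-- Area of a box. -/
def area (B : Box) : ℝ := (B.a₂ - B.a₁) * (B.b₂ - B.b₁)

/-- Width of a box. -/
def width (B : Box) : ℝ := B.a₂ - B.a₁

/-- Height of a box. -/
def height (B : Box) : ℝ := B.b₂ - B.b₁

/-- Center point of a box. -/
noncomputable def center (B : Box) : ℝ × ℝ := ((B.a₁ + B.a₂) / 2, (B.b₁ + B.b₂) / 2)

/-- Intersection area of two boxes. -/
noncomputable def inter (B B' : Box) : ℝ :=
  max 0 (min B.a₂ B'.a₂ - max B.a₁ B'.a₁) * max 0 (min B.b₂ B'.b₂ - max B.b₁ B'.b₁)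

/-- Union area of two boxes. -/
noncomputable def unionArea (B B' : Box) : ℝ := B.area + B'.area - inter B B'

/-- Intersection over union of two boxes. -/
noncomputable def iou (B B' : Box) : ℝ := inter B B' / unionArea B B'

/-- Area of the smallest enclosing box of two boxes. -/
noncomputable def encArea (B B' : Box) : ℝ :=
  (max B.a₂ B'.a₂ - min B.a₁ B'.a₁) * (max B.b₂ B'.b₂ - min B.b₁ B'.b₁)

/-- Squared diagonal length of the smallest enclosing box of two boxes. -/
noncomputable def c2 (B B' : Box) : ℝ :=
  (max B.a₂ B'.a₂ - min B.a₁ B'.a₁) ^ 2 + (max B.b₂ B'.b₂ - min B.b₁ B'.b₁) ^ 2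

/-- Squared Euclidean distance `ρ²` between the centers of two boxes. -/
noncomputable def rho2 (B B' : Box) : ℝ :=
  ((B.center).1 - (B'.center).1) ^ 2 + ((B.center).2 - (B'.center).2) ^ 2

/-- Normalized central point distance `D = ρ²/c²`. -/
noncomputable def dterm (B B' : Box) : ℝ := rho2 B B' / c2 B B'

/-- Aspect-ratio consistency term `V` of the CIoU loss. -/
noncomputable def vterm (B B' : Box) : ℝ :=
  4 / Real.pi ^ 2 *
    (Real.arctan (B'.width / B'.height) - Real.arctan (B.width / B.height)) ^ 2

/-- Trade-off parameter `α` of the CIoU loss. -/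
noncomputable def alpha (B B' : Box) : ℝ :=
  if iou B B' < 1 / 2 then 0 else vterm B B' / ((1 - iou B B') + vterm B B')

/-- The CIoU loss. -/
noncomputable def ciouLoss (B B' : Box) : ℝ :=
  1 - iou B B' + dterm B B' + alpha B B' * vterm B B'

/-- The IoU loss. -/
noncomputable def iouLoss (B B' : Box) : ℝ := 1 - iou B B'

/-- The GIoU loss. -/
noncomputable def giouLoss (B B' : Box) : ℝ :=
  1 - iou B B' + (encArea B B' - unionArea B B') / encArea B B'

end Box

/-- The box obtained by multiplying all four coordinates of `B` by `l > 0`. -/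
def Box.smul (l : ℝ) (hl : 0 < l) (B : Box) : Box :=
  ⟨l * B.a₁, l * B.b₁, l * B.a₂, l * B.b₂,
    mul_lt_mul_of_pos_left B.ha hl, mul_lt_mul_of_pos_left B.hb hl⟩

lemma Box.smul_inter (B B' : Box) (l : ℝ) (hl : 0 < l) :
    Box.inter (Box.smul l hl B) (Box.smul l hl B') = l ^ 2 * Box.inter B B' := by
  simp only [Box.inter, Box.smul, ← mul_min_of_nonneg _ _ hl.le,
    ← mul_max_of_nonneg _ _ hl.le, ← mul_sub]
  rw [show (0 : ℝ) = l * 0 by ring, ← mul_max_of_nonneg _ _ hl.le,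
    ← mul_max_of_nonneg _ _ hl.le]
  ring_nf

lemma Box.smul_area (B : Box) (l : ℝ) (hl : 0 < l) :
    (Box.smul l hl B).area = l ^ 2 * B.area := by
  simp only [Box.area, Box.smul]; ring

lemma Box.smul_iou (B B' : Box) (l : ℝ) (hl : 0 < l) :
    Box.iou (Box.smul l hl B) (Box.smul l hl B') = Box.iou B B' := by
  rw [Box.iou, Box.iou, Box.unionArea, Box.unionArea, Box.smul_inter, Box.smul_area,
    Box.smul_area,
    show l ^ 2 * B.area + l ^ 2 * B'.area - l ^ 2 * B.inter B'
      = l ^ 2 * (B.area + B'.area - B.inter B') by ring,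
    mul_div_mul_left _ _ (by positivity : (l : ℝ) ^ 2 ≠ 0)]

lemma Box.smul_dterm (B B' : Box) (l : ℝ) (hl : 0 < l) :
    Box.dterm (Box.smul l hl B) (Box.smul l hl B') = Box.dterm B B' := by
  have h1 : Box.rho2 (Box.smul l hl B) (Box.smul l hl B') = l ^ 2 * Box.rho2 B B' := by
    simp only [Box.rho2, Box.center, Box.smul]; ring
  have h2 : Box.c2 (Box.smul l hl B) (Box.smul l hl B') = l ^ 2 * Box.c2 B B' := by
    simp only [Box.c2, Box.smul, ← mul_min_of_nonneg _ _ hl.le,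
      ← mul_max_of_nonneg _ _ hl.le]
    ring
  rw [Box.dterm, Box.dterm, h1, h2, mul_div_mul_left _ _ (by positivity : (l : ℝ) ^ 2 ≠ 0)]

lemma Box.smul_vterm (B B' : Box) (l : ℝ) (hl : 0 < l) :
    Box.vterm (Box.smul l hl B) (Box.smul l hl B') = Box.vterm B B' := by
  have hw : ∀ C : Box, (Box.smul l hl C).width / (Box.smul l hl C).height =
      C.width / C.height := by
    intro C
    simp only [Box.width, Box.height, Box.smul, ← mul_sub]
    rw [mul_div_mul_left _ _ hl.ne']
  rw [Box.vterm, Box.vterm, hw, hw]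

/-- The CIoU loss is invariant to the scale of the regression problem: scaling both
boxes by any `λ > 0` leaves `IoU`, `D`, `V`, and hence `L_CIoU` unchanged. -/
theorem ciou_scale_invariant (B B' : Box) (l : ℝ) (hl : 0 < l) :
    Box.iou (Box.smul l hl B) (Box.smul l hl B') = Box.iou B B' ∧
    Box.dterm (Box.smul l hl B) (Box.smul l hl B') = Box.dterm B B' ∧
    Box.vterm (Box.smul l hl B) (Box.smul l hl B') = Box.vterm B B' ∧
    Box.ciouLoss (Box.smul l hl B) (Box.smul l hl B') = Box.ciouLoss B B' := by
  refine ⟨Box.smul_iou B B' l hl, Box.smul_dterm B B' l hl, Box.smul_vterm B B' l hl, ?_⟩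
  rw [Box.ciouLoss, Box.ciouLoss, Box.alpha, Box.alpha, Box.smul_iou, Box.smul_dterm,
    Box.smul_vterm]
end

section
/- If one axis-aligned box is contained in another (coordinatewise: a₁' ≤ a₁, b₁' ≤ b₁, a₂ ≤ a₂', b₂ ≤ b₂'), then the smallest enclosing box C equals the larger box B', the intersection area equals area(B), the union area equals area(B') = area(C), the GIoU penalty term (|C| − U)/|C| is zero, and hence L_GIoU(B,B') = L_IoU(B,B') = 1 − area(B)/area(B'). (The paper's analysis that when two boxes have an inclusion relationship, |C − A∪B| = 0 and GIoU loss degrades to IoU loss.) -/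
/-- If box `B` is contained in box `B'` coordinatewise, then the smallest enclosing
box `C` equals `B'`, the intersection area equals `area B`, the union area equals
`area B' = |C|`, the GIoU penalty term vanishes, and `L_GIoU = L_IoU = 1 − area B / area B'`. -/
theorem giou_degrades_to_iou_of_inclusion (B B' : Box)
    (h1 : B'.a₁ ≤ B.a₁) (h2 : B'.b₁ ≤ B.b₁) (h3 : B.a₂ ≤ B'.a₂) (h4 : B.b₂ ≤ B'.b₂) :
    (min B.a₁ B'.a₁ = B'.a₁ ∧ min B.b₁ B'.b₁ = B'.b₁ ∧
      max B.a₂ B'.a₂ = B'.a₂ ∧ max B.b₂ B'.b₂ = B'.b₂) ∧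
    Box.inter B B' = B.area ∧
    Box.unionArea B B' = B'.area ∧ B'.area = Box.encArea B B' ∧
    (Box.encArea B B' - Box.unionArea B B') / Box.encArea B B' = 0 ∧
    Box.giouLoss B B' = Box.iouLoss B B' ∧
    Box.iouLoss B B' = 1 - B.area / B'.area := by
  have hminA : min B.a₁ B'.a₁ = B'.a₁ := min_eq_right h1
  have hminB : min B.b₁ B'.b₁ = B'.b₁ := min_eq_right h2
  have hmaxA : max B.a₂ B'.a₂ = B'.a₂ := max_eq_right h3
  have hmaxB : max B.b₂ B'.b₂ = B'.b₂ := max_eq_right h4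
  have hinter : Box.inter B B' = B.area := by
    unfold Box.inter Box.area
    rw [min_eq_left h3, min_eq_left h4, max_eq_left h1, max_eq_left h2,
      max_eq_right (sub_nonneg.mpr B.ha.le), max_eq_right (sub_nonneg.mpr B.hb.le)]
  have hunion : Box.unionArea B B' = B'.area := by
    unfold Box.unionArea; rw [hinter]; ring
  have henc : B'.area = Box.encArea B B' := by
    unfold Box.encArea Box.area; rw [hminA, hminB, hmaxA, hmaxB]
  have hpen : (Box.encArea B B' - Box.unionArea B B') / Box.encArea B B' = 0 := by
    rw [hunion, ← henc, sub_self, zero_div]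
  refine ⟨⟨hminA, hminB, hmaxA, hmaxB⟩, hinter, hunion, henc, hpen, ?_, ?_⟩
  · unfold Box.giouLoss Box.iouLoss; rw [hpen]; ring
  · unfold Box.iouLoss Box.iou; rw [hinter, hunion]
end

section
/- If two axis-aligned boxes B and B' do not overlap (their intersection area I is zero), then their center points are distinct, so the normalized central point distance satisfies D = ρ²/c² > 0; moreover in this case IoU = 0 < 1/2, hence α = 0 and L_CIoU(B,B') = 1 + D > 1 = L_IoU(B,B'). (The paper's claim that, unlike IoU loss, the CIoU loss provides a moving direction for non-overlapping boxes: its penalty term is strictly positive whenever the boxes are disjoint.) -/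
/-- If two boxes do not overlap (intersection area zero), then their centers are
distinct, the normalized central point distance `D` is strictly positive,
`IoU = 0 < 1/2` so `α = 0`, and `L_CIoU = 1 + D > 1 = L_IoU`: the CIoU loss
provides a moving direction for non-overlapping boxes. -/
theorem ciou_positive_penalty_of_disjoint (B B' : Box) (h : Box.inter B B' = 0) :
    B.center ≠ B'.center ∧
    0 < Box.dterm B B' ∧
    Box.iou B B' = 0 ∧
    Box.alpha B B' = 0 ∧
    Box.ciouLoss B B' = 1 + Box.dterm B B' ∧
    Box.iouLoss B B' = 1 ∧
    Box.iouLoss B B' < Box.ciouLoss B B' := by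
  have hne : B.center ≠ B'.center := by
    intro hc
    have h1 : (B.a₁ + B.a₂) / 2 = (B'.a₁ + B'.a₂) / 2 := congrArg Prod.fst hc
    have h2 : (B.b₁ + B.b₂) / 2 = (B'.b₁ + B'.b₂) / 2 := congrArg Prod.snd hc
    have ha := B.ha; have ha' := B'.ha; have hb := B.hb; have hb' := B'.hb
    have hx : max B.a₁ B'.a₁ < min B.a₂ B'.a₂ := by
      apply max_lt <;> apply lt_min <;> linarith
    have hy : max B.b₁ B'.b₁ < min B.b₂ B'.b₂ := by
      apply max_lt <;> apply lt_min <;> linarith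
    have : (0:ℝ) < Box.inter B B' := by
      unfold Box.inter
      have hx' : (0:ℝ) < min B.a₂ B'.a₂ - max B.a₁ B'.a₁ := by linarith
      have hy' : (0:ℝ) < min B.b₂ B'.b₂ - max B.b₁ B'.b₁ := by linarith
      rw [max_eq_right hx'.le, max_eq_right hy'.le]
      exact mul_pos hx' hy'
    linarith [this, h.le, h.ge]
  have hc2 : 0 < Box.c2 B B' := by
    unfold Box.c2
    have : B.a₁ < max B.a₂ B'.a₂ := lt_of_lt_of_le B.ha (le_max_left _ _)
    have h1 : 0 < max B.a₂ B'.a₂ - min B.a₁ B'.a₁ := by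
      have := min_le_left B.a₁ B'.a₁; linarith
    positivity
  have hrho : 0 < Box.rho2 B B' := by
    unfold Box.rho2
    rcases eq_or_ne (B.center).1 (B'.center).1 with h1 | h1
    · have h2 : (B.center).2 ≠ (B'.center).2 := by
        intro h2; exact hne (Prod.ext h1 h2)
      have : (B.center).2 - (B'.center).2 ≠ 0 := sub_ne_zero.mpr h2
      positivity
    · have : (B.center).1 - (B'.center).1 ≠ 0 := sub_ne_zero.mpr h1
      positivity
  have hd : 0 < Box.dterm B B' := div_pos hrho hc2
  have hiou : Box.iou B B' = 0 := by
    unfold Box.iou; rw [h]; simp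
  have halpha : Box.alpha B B' = 0 := by
    unfold Box.alpha; rw [hiou]; norm_num
  have hciou : Box.ciouLoss B B' = 1 + Box.dterm B B' := by
    unfold Box.ciouLoss; rw [hiou, halpha]; ring
  have hil : Box.iouLoss B B' = 1 := by
    unfold Box.iouLoss; rw [hiou]; ring
  exact ⟨hne, hd, hiou, halpha, hciou, hil, by rw [hil, hciou]; linarith⟩
end
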